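/- arXiv:2507.12579 — 5 statements merged into one kernel-verified Lean document; each statement's English description precedes it below -/
import Mathlib

section
/- If a graph H contains two distinct vertices u, w with identical closed neighborhoods N_H[u] = N_H[w], then V(H) \ {u, w} is a failed zero forcing set of H, and hence FZ(H) ≥ |V(H)| − 2. -/
variable {V : Type*}

/-- Zero forcing closure: vertices eventually forced starting from `S`. -/
inductive ZFClos (G : SimpleGraph V) (S : Set V) : V → Prop
  | mem (v : V) : v ∈ S → ZFClos G S v
  | force (u v : V) : ZFClos G S u → G.Adj u v →
      (∀ w, G.Adj u w → w ≠ v → ZFClos G S w) → ZFClos G S v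

/-- `S` is a zero forcing set of `G`. -/
def IsZFSet (G : SimpleGraph V) (S : Set V) : Prop := ∀ v, ZFClos G S v

/-- `S` is a failed zero forcing set of `G`. -/
def IsFailedZFSet (G : SimpleGraph V) (S : Set V) : Prop := ¬ IsZFSet G S

/-- The zero forcing number `Z(G)`. -/
noncomputable def zfNumber (G : SimpleGraph V) [Fintype V] : ℕ :=
  sInf {n | ∃ S : Finset V, S.card = n ∧ IsZFSet G ↑S}

/-- The failed zero forcing number `FZ(G)`. -/
noncomputable def fzNumber (G : SimpleGraph V) [Fintype V] : ℕ :=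
  sSup {n | ∃ S : Finset V, S.card = n ∧ IsFailedZFSet G ↑S}

/-- Loop zero forcing closure. -/
inductive LZFClos (G : SimpleGraph V) (S : Set V) : V → Prop
  | mem (v : V) : v ∈ S → LZFClos G S v
  | force (u v : V) : LZFClos G S u → G.Adj u v →
      (∀ w, G.Adj u w → w ≠ v → LZFClos G S w) → LZFClos G S v
  | loop (v : V) : (∀ w, G.Adj v w → LZFClos G S w) → LZFClos G S v

/-- One ILT step: simultaneously clone every vertex.  The clone of `b` is `Sum.inr b`,
adjacent to the closed neighborhood of `b`; clones form an independent set. -/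
def iltStep (G : SimpleGraph V) : SimpleGraph (V ⊕ V) where
  Adj x y :=
    match x, y with
    | Sum.inl a, Sum.inl b => G.Adj a b
    | Sum.inl a, Sum.inr b => a = b ∨ G.Adj a b
    | Sum.inr a, Sum.inl b => b = a ∨ G.Adj b a
    | Sum.inr _, Sum.inr _ => False
  symm := by
    constructor
    rintro (a | a) (b | b) h
    · exact G.adj_symm h
    · exact h
    · exact h
    · exact h.elim
  loopless := by
    constructor
    rintro (a | a) h
    · exact G.irrefl h
    · exact h

/-- One ILAT step: simultaneously anticlone every vertex.  The anticlone of `b` is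
`Sum.inr b`, adjacent to the complement of the closed neighborhood of `b`. -/
def ilatStep (G : SimpleGraph V) : SimpleGraph (V ⊕ V) where
  Adj x y :=
    match x, y with
    | Sum.inl a, Sum.inl b => G.Adj a b
    | Sum.inl a, Sum.inr b => a ≠ b ∧ ¬ G.Adj a b
    | Sum.inr a, Sum.inl b => b ≠ a ∧ ¬ G.Adj b a
    | Sum.inr _, Sum.inr _ => False
  symm := by
    constructor
    rintro (a | a) (b | b) h
    · exact G.adj_symm h
    · exact h
    · exact h
    · exact h.elim
  loopless := by
    constructor
    rintro (a | a) h
    · exact G.irrefl h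
    · exact h

/-- One IIM step: each vertex `b` is cloned if `c b = true` and anticloned otherwise. -/
def iimStep (G : SimpleGraph V) (c : V → Bool) : SimpleGraph (V ⊕ V) where
  Adj x y :=
    match x, y with
    | Sum.inl a, Sum.inl b => G.Adj a b
    | Sum.inl a, Sum.inr b => if c b then a = b ∨ G.Adj a b else a ≠ b ∧ ¬ G.Adj a b
    | Sum.inr a, Sum.inl b => if c a then b = a ∨ G.Adj b a else b ≠ a ∧ ¬ G.Adj b a
    | Sum.inr _, Sum.inr _ => False
  symm := by
    constructor
    rintro (a | a) (b | b) h
    · exact G.adj_symm h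
    · exact h
    · exact h
    · exact h.elim
  loopless := by
    constructor
    rintro (a | a) h
    · exact G.irrefl h
    · exact h

/-- Adding a single clone of the vertex `v` (the new vertex is `none`). -/
def cloneOne (G : SimpleGraph V) (v : V) : SimpleGraph (Option V) where
  Adj x y :=
    match x, y with
    | some a, some b => G.Adj a b
    | some a, none => a = v ∨ G.Adj a v
    | none, some b => b = v ∨ G.Adj b v
    | none, none => False
  symm := by
    constructor
    rintro (_ | a) (_ | b) h
    · exact h.elim
    · exact h
    · exact h
    · exact G.adj_symm h
  loopless := by
    constructor
    rintro (_ | a) h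
    · exact h
    · exact G.irrefl h

/-- The vertex type after `l` doubling steps. -/
def IterV (V : Type*) : ℕ → Type _
  | 0 => V
  | l + 1 => IterV V l ⊕ IterV V l

instance iterVFintype [Fintype V] : ∀ l, Fintype (IterV V l)
  | 0 => ‹Fintype V›
  | l + 1 =>
    haveI : Fintype (IterV V l) := iterVFintype l
    inferInstanceAs (Fintype (IterV V l ⊕ IterV V l))

/-- `ILT_l(G)`. -/
def iltIter (G : SimpleGraph V) : ∀ l, SimpleGraph (IterV V l)
  | 0 => G
  | l + 1 => iltStep (iltIter G l)

/-- `ILAT_l(G)`. -/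
def ilatIter (G : SimpleGraph V) : ∀ l, SimpleGraph (IterV V l)
  | 0 => G
  | l + 1 => ilatStep (ilatIter G l)

/-- Iterated Independent Model: at step `n+1`, vertex `b` of the current graph is cloned
if `c n b = true` and anticloned otherwise. -/
def iimIter (G : SimpleGraph V) (c : ∀ n, IterV V n → Bool) : ∀ l, SimpleGraph (IterV V l)
  | 0 => G
  | l + 1 => iimStep (iimIter G c l) (c l)

/-- The level (time step of creation) of a vertex; level 0 is the base graph. -/
def iterLevel : ∀ {l}, IterV V l → ℕ
  | 0, _ => 0
  | _ + 1, Sum.inl x => iterLevel x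
  | l + 1, Sum.inr _ => l + 1

/-- The unique ancestor in the base graph of a vertex of an iterated graph. -/
def iterProj : ∀ {l}, IterV V l → V
  | 0, v => v
  | _ + 1, Sum.inl x => iterProj x
  | _ + 1, Sum.inr x => iterProj x

/-- The copy of a base vertex `v` (level 0) inside `IterV V l`. -/
def iterInj0 : ∀ l, V → IterV V l
  | 0, v => v
  | l + 1, v => Sum.inl (iterInj0 l v)

/-- The level-1 clone/anticlone of a base vertex `v`, viewed inside `IterV V (l+1)`. -/
def iterInj1 : ∀ l, V → IterV V (l + 1)
  | 0, v => Sum.inr v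
  | l + 1, v => Sum.inl (iterInj1 l v)

/-- The set of burned vertices after `t` burning steps, with sources `s 0, s 1, …`:
at each step the fire spreads to all neighbors of burned vertices and a new source burns. -/
def burnSet (G : SimpleGraph V) (s : ℕ → V) : ℕ → Set V
  | 0 => ∅
  | t + 1 => insert (s t) (burnSet G s t ∪ {v | ∃ u ∈ burnSet G s t, G.Adj u v})

/-- `G` can be fully burned in `k` steps. -/
def BurnsIn (G : SimpleGraph V) (k : ℕ) : Prop :=
  ∃ s : ℕ → V, burnSet G s k = Set.univ

/-- `G` can be fully burned in `k` steps with the final source superfluous: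
the fire spread alone covers everything at step `k`. -/
def BurnsInStar (G : SimpleGraph V) (k : ℕ) : Prop :=
  ∃ s : ℕ → V,
    (burnSet G s (k - 1) ∪ {v | ∃ u ∈ burnSet G s (k - 1), G.Adj u v}) = Set.univ

/-- The burning number `b(G)`. -/
noncomputable def burningNumber (G : SimpleGraph V) : ℕ := sInf {k | BurnsIn G k}

/-- The burning number `b*(G)` with superfluous final source. -/
noncomputable def burningNumberStar (G : SimpleGraph V) : ℕ := sInf {k | BurnsInStar G k}

/-- two distinct vertices with identical closed neighborhoods give a
failed zero forcing set of size `|V(H)| - 2`, so `FZ(H) ≥ |V(H)| - 2`. -/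
theorem stmt9 [Fintype V] (H : SimpleGraph V) (u w : V) (hne : u ≠ w)
    (h : insert u (H.neighborSet u) = insert w (H.neighborSet w)) :
    IsFailedZFSet H (Set.univ \ {u, w}) ∧ Fintype.card V - 2 ≤ fzNumber H := by
  classical
  -- closed neighborhood transfer
  have htrans : ∀ x, x ≠ u → x ≠ w → (H.Adj u x ↔ H.Adj w x) := by
    intro x hxu hxw
    constructor
    · intro hx
      have : x ∈ insert u (H.neighborSet u) := Or.inr hx
      rw [h] at this
      rcases this with h1 | h1
      · exact absurd h1 hxw
      · exact h1
    · intro hx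
      have : x ∈ insert w (H.neighborSet w) := Or.inr hx
      rw [← h] at this
      rcases this with h1 | h1
      · exact absurd h1 hxu
      · exact h1
  have key : ∀ v, ZFClos H (Set.univ \ {u, w}) v → v ≠ u ∧ v ≠ w := by
    intro v hv
    induction hv with
    | mem v hv =>
      simp only [Set.mem_diff, Set.mem_insert_iff, Set.mem_singleton_iff] at hv
      exact ⟨fun h1 => hv.2 (Or.inl h1), fun h1 => hv.2 (Or.inr h1)⟩
    | force a v ha hav hall iha ihall =>
      constructor
      · rintro rfl
        -- a adj v=u, a ≠ u, w ; so a adj w, w ≠ v, so w forced: contradiction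
        have haw : H.Adj a w := by
          have h1 := (htrans a iha.1 iha.2).mp hav.symm
          exact h1.symm
        have := ihall w haw (Ne.symm hne)
        exact this.2 rfl
      · rintro rfl
        have hau : H.Adj a u := by
          have h1 := (htrans a iha.1 iha.2).mpr hav.symm
          exact h1.symm
        have := ihall u hau hne
        exact this.1 rfl
  have hfail : IsFailedZFSet H (Set.univ \ {u, w}) := by
    intro hall
    exact (key u (hall u)).1 rfl
  refine ⟨hfail, ?_⟩
  have hbdd : BddAbove {n | ∃ S : Finset V, S.card = n ∧ IsFailedZFSet H ↑S} := by
    refine ⟨Fintype.card V, ?_⟩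
    rintro n ⟨S, rfl, -⟩
    exact Finset.card_le_card (Finset.subset_univ S)
  have hmem : (Fintype.card V - 2) ∈ {n | ∃ S : Finset V, S.card = n ∧ IsFailedZFSet H ↑S} := by
    refine ⟨Finset.univ \ {u, w}, ?_, ?_⟩
    · rw [Finset.card_sdiff_of_subset (Finset.subset_univ _), Finset.card_univ,
        Finset.card_insert_of_notMem (by simpa using hne), Finset.card_singleton]
    · have : ((Finset.univ \ {u, w} : Finset V) : Set V) = Set.univ \ {u, w} := by
        simp
      rw [this]
      exact hfail
  exact le_csSup hbdd hmem
end

section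
/- Let G be any graph, U a zero forcing set of G, l ≥ 0, and H = ILT_l(G). Let W consist of U together with all descendants (iterated clones) of vertices of U in H. Then W is a zero forcing set of H. Consequently Z(ILT_l(G)) ≤ 2^l · Z(G). -/
variable {V : Type*}

lemma iltStep_zf {G : SimpleGraph V} {S : Set V} {v : V} (h : ZFClos G S v) :
    ZFClos (iltStep G) (Sum.inl '' S ∪ Sum.inr '' S) (Sum.inl v) ∧
    ZFClos (iltStep G) (Sum.inl '' S ∪ Sum.inr '' S) (Sum.inr v) := by
  induction h with
  | mem v hv => exact ⟨.mem _ (Or.inl ⟨v, hv, rfl⟩), .mem _ (Or.inr ⟨v, hv, rfl⟩)⟩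
  | force u v hu hadj hw ihu ihw =>
    have hinl : ZFClos (iltStep G) (Sum.inl '' S ∪ Sum.inr '' S) (Sum.inl v) := by
      refine .force (Sum.inr u) (Sum.inl v) ihu.2 (Or.inr hadj.symm) ?_
      rintro (w | w) haw hne
      · rcases haw with rfl | haw
        · exact ihu.1
        · exact (ihw w haw.symm (by rintro rfl; exact hne rfl)).1
      · exact haw.elim
    refine ⟨hinl, ?_⟩
    refine .force (Sum.inl u) (Sum.inr v) ihu.1 (Or.inr hadj) ?_
    rintro (w | w) haw hne
    · rcases eq_or_ne w v with rfl | hwv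
      · exact hinl
      · exact (ihw w haw hwv).1
    · rcases haw with rfl | haw
      · exact ihu.2
      · exact (ihw w haw (by rintro rfl; exact hne rfl)).2

lemma iter_zf (G : SimpleGraph V) (U : Set V) (hU : IsZFSet G U) :
    ∀ l, IsZFSet (iltIter G l) {x : IterV V l | iterProj x ∈ U}
  | 0 => hU
  | l + 1 => by
    have ih := iter_zf G U hU l
    have hset :
        (Sum.inl '' {x : IterV V l | iterProj x ∈ U} ∪
          Sum.inr '' {x : IterV V l | iterProj x ∈ U}) =
        {x : IterV V (l + 1) | iterProj x ∈ U} := by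
      ext x
      rcases x with y | y
      · constructor
        · rintro (⟨a, ha, h⟩ | ⟨a, ha, h⟩)
          · cases h; exact ha
          · cases h
        · intro h; exact Or.inl ⟨y, h, rfl⟩
      · constructor
        · rintro (⟨a, ha, h⟩ | ⟨a, ha, h⟩)
          · cases h
          · cases h; exact ha
        · intro h; exact Or.inr ⟨y, h, rfl⟩
    intro x
    rw [show ({x : IterV V (l+1) | iterProj x ∈ U} : Set (IterV V (l+1))) = _ from hset.symm]
    rcases x with y | y
    · exact (iltStep_zf (ih y)).1
    · exact (iltStep_zf (ih y)).2

lemma card_proj [Fintype V] (S : Finset V) :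
    ∀ l, Nat.card {x : IterV V l | iterProj x ∈ S} = 2 ^ l * S.card
  | 0 => by
    have : {x : IterV V 0 | iterProj x ∈ S} = (S : Set V) := rfl
    show Nat.card (S : Set V) = _
    rw [Nat.card_coe_set_eq, Set.ncard_coe_finset, pow_zero, one_mul]
  | l + 1 => by
    classical
    have e : {x : IterV V (l+1) | iterProj x ∈ S} ≃
        ({x : IterV V l | iterProj x ∈ S} ⊕ {x : IterV V l | iterProj x ∈ S}) :=
      Equiv.subtypeSum (p := fun x : IterV V l ⊕ IterV V l => @iterProj V (l+1) x ∈ S)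
    haveI : Finite (IterV V l) := Finite.of_fintype _
    rw [Nat.card_congr e, Nat.card_sum, card_proj S l, pow_succ]
    ring

/-- a zero forcing set of `G` together with all of its descendants is a
zero forcing set of `ILT_l(G)`; hence `Z(ILT_l(G)) ≤ 2^l · Z(G)`. -/
theorem stmt11 [Fintype V] (G : SimpleGraph V) (l : ℕ) (U : Set V) (hU : IsZFSet G U) :
    IsZFSet (iltIter G l) {x : IterV V l | iterProj x ∈ U} ∧
    zfNumber (iltIter G l) ≤ 2 ^ l * zfNumber G := by
  classical
  refine ⟨iter_zf G U hU l, ?_⟩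
  obtain ⟨S, hScard, hSzf⟩ : ∃ S : Finset V, S.card = zfNumber G ∧ IsZFSet G ↑S := by
    have hne : {n | ∃ S : Finset V, S.card = n ∧ IsZFSet G ↑S}.Nonempty :=
      ⟨Finset.univ.card, Finset.univ, rfl, fun v => .mem v (by simp)⟩
    exact Nat.sInf_mem hne
  have hzf := iter_zf G (↑S) hSzf l
  set s : Set (IterV V l) := {x | iterProj x ∈ (S : Set V)} with hs
  have hcard : s.toFinset.card = 2 ^ l * S.card := by
    rw [Set.toFinset_card, ← Nat.card_eq_fintype_card]
    exact card_proj S l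
  calc zfNumber (iltIter G l) ≤ s.toFinset.card :=
        Nat.sInf_le ⟨s.toFinset, rfl, by rwa [Set.coe_toFinset]⟩
    _ = 2 ^ l * zfNumber G := by rw [hcard, hScard]
end

section
/- In H = ILAT_l(G) with l ≥ 1, every vertex v lying in a level 0 ≤ i ≤ l−1 has degree exactly |V(H)|/2 − 1 in H. -/
variable {V : Type*}

/-- in `ILAT_l(G)` with `l ≥ 1`, every vertex of level at most `l - 1`
has degree exactly `|V|/2 - 1`. -/
theorem stmt14 [Fintype V] (G : SimpleGraph V) (l : ℕ) (v : IterV V (l + 1))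
    (hv : iterLevel v ≤ l) :
    ((ilatIter G (l + 1)).neighborSet v).ncard =
      Fintype.card (IterV V (l + 1)) / 2 - 1 := by
  classical
  obtain (a | a) := v
  · -- level ≤ l case: v = Sum.inl a
    set H := ilatIter G l with hH
    set n := Fintype.card (IterV V l) with hn
    have hcard : Fintype.card (IterV V (l + 1)) = 2 * n := by
      show Fintype.card (IterV V l ⊕ IterV V l) = 2 * n
      simp [Fintype.card_sum, two_mul]
      rfl
    have hadj : ilatIter G (l + 1) = ilatStep H := rfl
    rw [hadj, hcard]
    have hset : (ilatStep H).neighborSet (Sum.inl a) =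
        (fun b => if H.Adj a b then (Sum.inl b : IterV V l ⊕ IterV V l)
          else Sum.inr b) '' {b | b ≠ a} := by
      ext x
      obtain (b | b) := x
      · simp only [SimpleGraph.mem_neighborSet, Set.mem_image, Set.mem_setOf_eq]
        constructor
        · intro h
          have h' : H.Adj a b := h
          exact ⟨b, fun hb => H.loopless.irrefl a (hb ▸ h'), by simp [h']⟩
        · rintro ⟨c, hc, hfc⟩
          by_cases hac : H.Adj a c
          · simp only [if_pos hac] at hfc
            injection hfc with hbc
            exact hbc ▸ hac
          · simp [if_neg hac] at hfc
      · simp only [SimpleGraph.mem_neighborSet, Set.mem_image, Set.mem_setOf_eq]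
        constructor
        · intro h
          have h' : a ≠ b ∧ ¬ H.Adj a b := h
          exact ⟨b, fun hb => h'.1 hb.symm, by simp [h'.2]⟩
        · rintro ⟨c, hc, hfc⟩
          by_cases hac : H.Adj a c
          · simp [if_pos hac] at hfc
          · simp only [if_neg hac] at hfc
            injection hfc with hbc
            subst hbc
            exact ⟨fun h => hc h.symm, hac⟩
    show ((ilatStep H).neighborSet (Sum.inl a : IterV V l ⊕ IterV V l)).ncard = 2 * n / 2 - 1
    rw [hset]
    have hinj : Function.Injective
        (fun b => if H.Adj a b then (Sum.inl b : IterV V l ⊕ IterV V l) else Sum.inr b) := by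
      intro b c hbc
      by_cases hb : H.Adj a b <;> by_cases hcq : H.Adj a c <;>
        simp_all
    rw [Set.ncard_image_of_injective _ hinj]
    have : ({b | b ≠ a} : Set (IterV V l)) = {a}ᶜ := by ext; simp
    rw [this]
    have h2 := Set.ncard_add_ncard_compl ({a} : Set (IterV V l))
    rw [Set.ncard_singleton] at h2
    have h3 : Nat.card (IterV V l) = n := Nat.card_eq_fintype_card
    omega
  · simp only [iterLevel] at hv
    omega
end

section
/- Let G be any graph and let H be a connected graph obtained from G by an iterated independent model (IIM) process of length l in which at least one vertex added at the final step l is an anticlone. Then H can be burned in at most 4 steps, and moreover the final source is superfluous: b*(H) ≤ 4. In particular, choosing the anticloned vertex u as the first source and its anticlone u'_l as the second source burns all vertices of levels 0 through l−1 by step 3 and all of H by step 4. -/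
variable {V : Type*}

lemma exists_adj_of_walk {W : Type*} {G : SimpleGraph W} {x y : W} (p : G.Walk x y)
    (h : x ≠ y) : ∃ w, G.Adj x w := by
  cases p with
  | nil => exact absurd rfl h
  | cons h' _ => exact ⟨_, h'⟩

lemma burnSet_subset_succ {W : Type*} (G : SimpleGraph W) (s : ℕ → W) (t : ℕ) :
    burnSet G s t ⊆ burnSet G s (t + 1) :=
  fun v hv => Set.mem_insert_of_mem _ (Set.mem_union_left _ hv)

/-- a connected IIM graph whose final level contains an anticlone can be
burned in at most 4 steps, with superfluous final source: `b(H) ≤ 4` and `b*(H) ≤ 4`. -/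
theorem stmt15 (G : SimpleGraph V) (c : ∀ n, IterV V n → Bool) (l : ℕ)
    (hconn : (iimIter G c (l + 1)).Connected)
    (hanti : ∃ u : IterV V l, c l u = false) :
    burningNumber (iimIter G c (l + 1)) ≤ 4 ∧
    burningNumberStar (iimIter G c (l + 1)) ≤ 4 := by
  classical
  obtain ⟨u, hu⟩ := hanti
  set H := iimIter G c (l + 1) with hH
  -- every new vertex has an old neighbor
  have key : ∀ b : IterV V l, ∃ a, H.Adj (Sum.inl a) (Sum.inr b) := by
    intro b
    have hr : H.Reachable (Sum.inr b) (Sum.inl b) := hconn.preconnected _ _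
    obtain ⟨p⟩ := hr
    obtain ⟨w, hw⟩ := exists_adj_of_walk p (by exact Sum.inr_ne_inl)
    cases w with
    | inl a => exact ⟨a, hw.symm⟩
    | inr a => exact hw.elim
  set s : ℕ → (IterV V l ⊕ IterV V l) :=
    fun n => if n = 1 then Sum.inr u else Sum.inl u with hs
  have hB1 : Sum.inl u ∈ burnSet H s 1 := by
    have : s 0 = Sum.inl u := by simp [hs]
    exact this ▸ Set.mem_insert _ _
  have hB2u : (Sum.inr u : IterV V l ⊕ IterV V l) ∈ burnSet H s 2 := by
    have : s 1 = Sum.inr u := by simp [hs]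
    exact this ▸ Set.mem_insert _ _
  have hB12 := burnSet_subset_succ H s 1
  have hB23 := burnSet_subset_succ H s 2
  have allInl : ∀ a : IterV V l, Sum.inl a ∈ burnSet H s 3 := by
    intro a
    by_cases hau : a = u
    · exact hB23 (hB12 (hau ▸ hB1))
    · by_cases hadj : (iimIter G c l).Adj u a
      · refine hB23 (Set.mem_insert_of_mem _ (Set.mem_union_right _ ?_))
        exact ⟨Sum.inl u, hB1, hadj⟩
      · refine Set.mem_insert_of_mem _ (Set.mem_union_right _ ?_)
        refine ⟨Sum.inr u, hB2u, ?_⟩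
        show (iimStep (iimIter G c l) (c l)).Adj (Sum.inr u) (Sum.inl a)
        simp only [iimStep, hu]
        exact ⟨hau, fun h => hadj h.symm⟩
  have hfinal : (burnSet H s 3 ∪ {v | ∃ u ∈ burnSet H s 3, H.Adj u v}) = Set.univ := by
    ext v
    simp only [Set.mem_univ, iff_true]
    cases v with
    | inl a => exact Set.mem_union_left _ (allInl a)
    | inr b =>
      obtain ⟨a, ha⟩ := key b
      exact Set.mem_union_right _ ⟨Sum.inl a, allInl a, ha⟩
  constructor
  · refine Nat.sInf_le ⟨s, ?_⟩
    have : burnSet H s 4 =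
        insert (s 3) (burnSet H s 3 ∪ {v | ∃ u ∈ burnSet H s 3, H.Adj u v}) := rfl
    rw [this, hfinal]
    exact Set.insert_eq_self.mpr (Set.mem_univ _)
  · exact Nat.sInf_le ⟨s, hfinal⟩
end

section
/- Let G be a graph, W a failed loop zero forcing set of G, and H = ILT_l(G). Then W together with all vertices of H in levels 1 through l is a failed zero forcing set of H. -/
variable {V : Type*}

lemma iterInj0_eq_iff : ∀ (l : ℕ) (z : IterV V l) (w : V),
    iterInj0 l w = z ↔ iterLevel z = 0 ∧ iterProj z = w
  | 0, z, w => by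
    simp [iterInj0, iterLevel, iterProj, eq_comm]
    exact eq_comm
  | l + 1, Sum.inl x, w => by
    simp only [iterInj0, iterLevel, iterProj]
    change (Sum.inl (iterInj0 l w) : IterV V l ⊕ IterV V l) = Sum.inl x ↔ _
    rw [Sum.inl.injEq]
    exact iterInj0_eq_iff l x w
  | l + 1, Sum.inr x, w => by
    simp [iterInj0, iterLevel, iterProj]

lemma iterLevel_inj0 (l : ℕ) (w : V) : iterLevel (iterInj0 l w) = 0 :=
  ((iterInj0_eq_iff l (iterInj0 l w) w).mp rfl).1

lemma iterProj_inj0 (l : ℕ) (w : V) : iterProj (iterInj0 l w) = w :=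
  ((iterInj0_eq_iff l (iterInj0 l w) w).mp rfl).2

lemma adj_inj0 (G : SimpleGraph V) : ∀ (l : ℕ) (y : IterV V l) (w : V),
    (iltIter G l).Adj y (iterInj0 l w) ↔
      (G.Adj (iterProj y) w ∨ (1 ≤ iterLevel y ∧ iterProj y = w))
  | 0, y, w => by
    simp [iltIter, iterInj0, iterLevel, iterProj]
  | l + 1, Sum.inl x, w => by
    show (iltIter G l).Adj x (iterInj0 l w) ↔ _
    exact adj_inj0 G l x w
  | l + 1, Sum.inr z, w => by
    show (iterInj0 l w = z ∨ (iltIter G l).Adj (iterInj0 l w) z) ↔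
      (G.Adj (iterProj z) w ∨ (1 ≤ l + 1 ∧ iterProj z = w))
    rw [iterInj0_eq_iff, (iltIter G l).adj_comm, adj_inj0 G l z w]
    constructor
    · rintro (⟨_, h⟩ | h | ⟨_, h⟩)
      · exact Or.inr ⟨Nat.le_add_left 1 l, h⟩
      · exact Or.inl h
      · exact Or.inr ⟨Nat.le_add_left 1 l, h⟩
    · rintro (h | ⟨_, h⟩)
      · exact Or.inr (Or.inl h)
      · rcases Nat.eq_zero_or_pos (iterLevel z) with h0 | h0
        · exact Or.inl ⟨h0, h⟩
        · exact Or.inr (Or.inr ⟨h0, h⟩)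

lemma zf_to_lzf (G : SimpleGraph V) (l : ℕ) (W : Set V) (x : IterV V l)
    (hx : ZFClos (iltIter G l) ((iterInj0 l '' W) ∪ {x : IterV V l | 1 ≤ iterLevel x}) x) :
    ∀ w : V, x = iterInj0 l w → LZFClos G W w := by
  induction hx with
  | mem v hv =>
    rintro w rfl
    rcases hv with ⟨a, ha, hae⟩ | hv
    · rcases (iterInj0_eq_iff l _ a).mp hae with ⟨_, hp⟩
      rw [iterProj_inj0] at hp
      exact LZFClos.mem w (hp ▸ ha)
    · simp only [Set.mem_setOf_eq, iterLevel_inj0] at hv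
      omega
  | force u v hu hadj hall ihu ihall =>
    rintro w rfl
    set a := iterProj u with ha
    rcases Nat.eq_zero_or_pos (iterLevel u) with h0 | h0
    · -- u is a level-0 vertex, mirroring a standard force in G
      have hu0 : iterInj0 l a = u := (iterInj0_eq_iff l u a).mpr ⟨h0, rfl⟩
      have haw : G.Adj a w := by
        rcases (adj_inj0 G l u w).mp hadj with h | ⟨h1, _⟩
        · exact h
        · omega
      have hLa : LZFClos G W a := ihu a hu0.symm
      refine LZFClos.force a w hLa haw fun c hc hcw => ?_
      have hadjc : (iltIter G l).Adj u (iterInj0 l c) :=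
        (adj_inj0 G l u c).mpr (Or.inl hc)
      have hne : iterInj0 l c ≠ iterInj0 l w := fun h => by
        have := (iterInj0_eq_iff l _ c).mp h
        rw [iterProj_inj0] at this
        exact hcw this.2.symm
      exact ihall _ hadjc hne c rfl
    · -- u is a clone, adjacent to the closed neighborhood of its projection
      have hadj' : G.Adj a w ∨ a = w := by
        rcases (adj_inj0 G l u w).mp hadj with h | ⟨_, h⟩
        · exact Or.inl h
        · exact Or.inr h
      have key : ∀ c : V, (G.Adj a c ∨ a = c) → c ≠ w → LZFClos G W c := by
        intro c hc hcw
        have hadjc : (iltIter G l).Adj u (iterInj0 l c) := by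
          refine (adj_inj0 G l u c).mpr ?_
          rcases hc with h | h
          · exact Or.inl h
          · exact Or.inr ⟨h0, h⟩
        have hne : iterInj0 l c ≠ iterInj0 l w := fun h => by
          have := (iterInj0_eq_iff l _ c).mp h
          rw [iterProj_inj0] at this
          exact hcw this.2.symm
        exact ihall _ hadjc hne c rfl
      rcases hadj' with haw | rfl
      · -- standard force from a
        have hLa : LZFClos G W a := key a (Or.inr rfl) (G.ne_of_adj haw)
        exact LZFClos.force a w hLa haw fun c hc hcw => key c (Or.inl hc) hcw
      · -- loop rule at a = w
        exact LZFClos.loop a fun c hc => key c (Or.inl hc) (G.ne_of_adj hc).symm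

/-- a failed loop zero forcing set of `G`, together with all vertices of
levels `1` through `l`, is a failed zero forcing set of `ILT_l(G)`. -/
theorem stmt19 (G : SimpleGraph V) (l : ℕ) (W : Set V)
    (hW : ∃ v, ¬ LZFClos G W v) :
    IsFailedZFSet (iltIter G l)
      ((iterInj0 l '' W) ∪ {x : IterV V l | 1 ≤ iterLevel x}) := by
  rcases hW with ⟨v, hv⟩
  intro h
  exact hv (zf_to_lzf G l W (iterInj0 l v) (h (iterInj0 l v)) v rfl)
end
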